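/- arXiv:1303.4935 — 7 statements merged into one kernel-verified Lean document; each statement's English description precedes it below -/
import Mathlib

section
/- Let (G, Ḡ, G*, φ₊, φ₋) be a factorized group. Define xR(x,y) = ψ⁻¹(φ₋(x) ψ(y) φ₋(x)⁻¹) and xL(x,y) = ψ⁻¹(φ₊(xR(x,y))⁻¹ ψ(x) φ₊(xR(x,y))). Then the map R : G* × G* → G* × G* given by R(x,y) = (xL(x,y), xR(x,y)) satisfies the set-theoretical Yang–Baxter equation R₂₃ R₁₃ R₁₂ = R₁₂ R₁₃ R₂₃ on G* × G* × G*. -/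
/-- A factorized group: groups `Gb` (Ḡ) and `Gs` (G*), a normal subgroup `G` of `Gb`,
and group homomorphisms `φp, φm : Gs → Gb` such that `ψ x = φp x * (φm x)⁻¹` is a
bijection from `Gs` onto `G`. -/
structure FactorizedGroup (Gb Gs : Type*) [Group Gb] [Group Gs] where
  G : Subgroup Gb
  normal : G.Normal
  φp : Gs →* Gb
  φm : Gs →* Gb
  mem_G : ∀ x : Gs, φp x * (φm x)⁻¹ ∈ G
  bij : Function.Bijective (fun x : Gs => (⟨φp x * (φm x)⁻¹, mem_G x⟩ : G))

namespace FactorizedGroup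

variable {Gb Gs : Type*} [Group Gb] [Group Gs] (FG : FactorizedGroup Gb Gs)

/-- The map `ψ : G* → Ḡ`. -/
def ψ (x : Gs) : Gb := FG.φp x * (FG.φm x)⁻¹

/-- The inverse of `ψ` (defined on the image `G` of `ψ`). -/
noncomputable def ψinv (g : Gb) : Gs :=
  haveI : Nonempty Gs := ⟨1⟩
  Function.invFun FG.ψ g

/-- `xR(x,y) = ψ⁻¹(φ₋(x) ψ(y) φ₋(x)⁻¹)`. -/
noncomputable def xR (x y : Gs) : Gs := FG.ψinv (FG.φm x * FG.ψ y * (FG.φm x)⁻¹)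

/-- `xL(x,y) = ψ⁻¹(φ₊(xR(x,y))⁻¹ ψ(x) φ₊(xR(x,y)))`. -/
noncomputable def xL (x y : Gs) : Gs :=
  FG.ψinv ((FG.φp (FG.xR x y))⁻¹ * FG.ψ x * FG.φp (FG.xR x y))

/-- The Yang–Baxter map `R(x,y) = (xL(x,y), xR(x,y))`. -/
noncomputable def Rmap : Gs × Gs → Gs × Gs := fun p => (FG.xL p.1 p.2, FG.xR p.1 p.2)

end FactorizedGroup

/-- `R₁₂`: apply `R` to the first two factors. -/
def map12 {H : Type*} (R : H × H → H × H) : H × H × H → H × H × H :=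
  fun p => ((R (p.1, p.2.1)).1, (R (p.1, p.2.1)).2, p.2.2)

/-- `R₁₃`: apply `R` to the first and third factors. -/
def map13 {H : Type*} (R : H × H → H × H) : H × H × H → H × H × H :=
  fun p => ((R (p.1, p.2.2)).1, p.2.1, (R (p.1, p.2.2)).2)

/-- `R₂₃`: apply `R` to the last two factors. -/
def map23 {H : Type*} (R : H × H → H × H) : H × H × H → H × H × H :=
  fun p => (p.1, R (p.2.1, p.2.2))

namespace FactorizedGroup

variable {Gb Gs : Type*} [Group Gb] [Group Gs] (FG : FactorizedGroup Gb Gs)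

lemma ψ_injective : Function.Injective FG.ψ := fun x y h => FG.bij.1 (Subtype.ext h)

lemma ψ_mem (x : Gs) : FG.ψ x ∈ FG.G := FG.mem_G x

lemma ψ_ψinv {g : Gb} (hg : g ∈ FG.G) : FG.ψ (FG.ψinv g) = g := by
  haveI : Nonempty Gs := ⟨1⟩
  obtain ⟨x, hx⟩ := FG.bij.2 ⟨g, hg⟩
  exact Function.invFun_eq ⟨x, congrArg Subtype.val hx⟩

lemma ψ_xR (x y : Gs) : FG.ψ (FG.xR x y) = FG.φm x * FG.ψ y * (FG.φm x)⁻¹ :=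
  FG.ψ_ψinv (FG.normal.conj_mem _ (FG.ψ_mem y) (FG.φm x))

lemma ψ_xL (x y : Gs) :
    FG.ψ (FG.xL x y) = (FG.φp (FG.xR x y))⁻¹ * FG.ψ x * FG.φp (FG.xR x y) :=
  FG.ψ_ψinv (by simpa using FG.normal.conj_mem _ (FG.ψ_mem x) (FG.φp (FG.xR x y))⁻¹)

lemma ψ_mul (x y : Gs) : FG.ψ (x * y) = FG.φp x * FG.ψ y * (FG.φm x)⁻¹ := by
  simp [ψ, mul_assoc]

/-- Key identity (I): `xR(x,y) * xL(x,y) = x * y` in `G*`. -/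
lemma xR_mul_xL (x y : Gs) : FG.xR x y * FG.xL x y = x * y := by
  apply FG.ψ_injective
  rw [FG.ψ_mul, FG.ψ_xL, FG.ψ_mul]
  have h1 := FG.ψ_xR x y
  simp only [ψ] at h1 ⊢
  have hpr : FG.φp (FG.xR x y) =
      (FG.φm x * (FG.φp y * (FG.φm y)⁻¹) * (FG.φm x)⁻¹) * FG.φm (FG.xR x y) := by
    rw [← h1]; group
  rw [hpr]; group

/-- Third-component identity of the Yang–Baxter equation. -/
lemma yb3 (x y z : Gs) :
    FG.xR (FG.xR x y) (FG.xR (FG.xL x y) z) = FG.xR x (FG.xR y z) := by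
  apply FG.ψ_injective
  rw [FG.ψ_xR, FG.ψ_xR, FG.ψ_xR, FG.ψ_xR]
  have h : FG.φm (FG.xR x y) * FG.φm (FG.xL x y) = FG.φm x * FG.φm y := by
    rw [← map_mul, FG.xR_mul_xL, map_mul]
  have hb : FG.φm (FG.xR x y) = (FG.φm x * FG.φm y) * (FG.φm (FG.xL x y))⁻¹ := by
    rw [← h]; group
  rw [hb]; group

/-- Second-component identity of the Yang–Baxter equation. -/
lemma yb2 (x y z : Gs) :
    FG.xL (FG.xR x y) (FG.xR (FG.xL x y) z) =
      FG.xR (FG.xL x (FG.xR y z)) (FG.xL y z) := by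
  apply FG.ψ_injective
  rw [FG.ψ_xL, FG.yb3, FG.ψ_xR, FG.ψ_xR, FG.ψ_xL]
  have hm : FG.φm (FG.xR x (FG.xR y z)) * FG.φm (FG.xL x (FG.xR y z)) =
      FG.φm x * FG.φm (FG.xR y z) := by
    rw [← map_mul, FG.xR_mul_xL, map_mul]
  have hmp : FG.φm (FG.xL x (FG.xR y z)) =
      (FG.φm (FG.xR x (FG.xR y z)))⁻¹ * (FG.φm x * FG.φm (FG.xR y z)) := by
    rw [← hm]; group
  have hq := FG.ψ_xR x (FG.xR y z)
  simp only [ψ] at hq ⊢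
  have hpq : FG.φp (FG.xR x (FG.xR y z)) =
      (FG.φm x * (FG.φp (FG.xR y z) * (FG.φm (FG.xR y z))⁻¹) * (FG.φm x)⁻¹) *
        FG.φm (FG.xR x (FG.xR y z)) := by
    rw [← hq]; group
  rw [hpq, hmp]; group

/-- First-component identity of the Yang–Baxter equation. -/
lemma yb1 (x y z : Gs) :
    FG.xL (FG.xL x y) z = FG.xL (FG.xL x (FG.xR y z)) (FG.xL y z) := by
  apply FG.ψ_injective
  rw [FG.ψ_xL, FG.ψ_xL, FG.ψ_xL, FG.ψ_xL]
  have hI := FG.xR_mul_xL (FG.xR x y) (FG.xR (FG.xL x y) z)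
  rw [FG.yb3, FG.yb2] at hI
  have hp : FG.φp (FG.xR x (FG.xR y z)) *
      FG.φp (FG.xR (FG.xL x (FG.xR y z)) (FG.xL y z)) =
      FG.φp (FG.xR x y) * FG.φp (FG.xR (FG.xL x y) z) := by
    rw [← map_mul, ← map_mul, hI]
  have h2 : FG.φp (FG.xR (FG.xL x (FG.xR y z)) (FG.xL y z)) =
      (FG.φp (FG.xR x (FG.xR y z)))⁻¹ *
        (FG.φp (FG.xR x y) * FG.φp (FG.xR (FG.xL x y) z)) := by
    rw [← hp]; group
  rw [h2]; group

end FactorizedGroup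

/-- The map `R(x,y) = (xL(x,y), xR(x,y))` associated to a factorized group satisfies the
set-theoretical Yang–Baxter equation `R₂₃ R₁₃ R₁₂ = R₁₂ R₁₃ R₂₃`. -/
theorem factorizedGroup_yangBaxter {Gb Gs : Type*} [Group Gb] [Group Gs]
    (FG : FactorizedGroup Gb Gs) :
    map23 FG.Rmap ∘ map13 FG.Rmap ∘ map12 FG.Rmap =
      map12 FG.Rmap ∘ map13 FG.Rmap ∘ map23 FG.Rmap := by
  funext p
  obtain ⟨x, y, z⟩ := p
  show (FG.xL (FG.xL x y) z,
        FG.xL (FG.xR x y) (FG.xR (FG.xL x y) z),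
        FG.xR (FG.xR x y) (FG.xR (FG.xL x y) z)) =
      (FG.xL (FG.xL x (FG.xR y z)) (FG.xL y z),
        FG.xR (FG.xL x (FG.xR y z)) (FG.xL y z),
        FG.xR x (FG.xR y z))
  rw [FG.yb1, FG.yb2, FG.yb3]
end

section
/- Let (G, Ḡ, G*, φ₊, φ₋) be a factorized group with bijection ψ. For x, y ∈ G*, the pair (x', y') = (xL(x,y), xR(x,y)) is the unique pair in G* × G* satisfying the system: y'x' = xy in G* and φ₊(y')φ₋(x') = φ₋(x)φ₊(y) in Ḡ. -/
section Aux

variable {Gb Gs : Type*} [Group Gb] [Group Gs] (FG : FactorizedGroup Gb Gs)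

lemma psi_inj : Function.Injective FG.ψ := fun a b h =>
  FG.bij.injective (Subtype.ext h)

lemma psi_psiinv {g : Gb} (hg : g ∈ FG.G) : FG.ψ (FG.ψinv g) = g := by
  haveI : Nonempty Gs := ⟨1⟩
  obtain ⟨z, hz⟩ := FG.bij.surjective ⟨g, hg⟩
  have hz' : FG.ψ z = g := congrArg Subtype.val hz
  exact Function.invFun_eq ⟨z, hz'⟩

lemma psi_xR (x y : Gs) : FG.ψ (FG.xR x y) = FG.φm x * FG.ψ y * (FG.φm x)⁻¹ :=
  psi_psiinv FG (FG.normal.conj_mem _ (FG.mem_G y) (FG.φm x))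

lemma psi_xL (x y : Gs) :
    FG.ψ (FG.xL x y) = (FG.φp (FG.xR x y))⁻¹ * FG.ψ x * FG.φp (FG.xR x y) :=
  psi_psiinv FG (by simpa [FactorizedGroup.ψ] using FG.normal.conj_mem _ (FG.mem_G x) (FG.φp (FG.xR x y))⁻¹)

/-- Forward direction: any solution of the system equals `(xL, xR)`. -/
lemma system_unique (x y x' y' : Gs)
    (h1 : y' * x' = x * y) (h2 : FG.φp y' * FG.φm x' = FG.φm x * FG.φp y) :
    x' = FG.xL x y ∧ y' = FG.xR x y := by
  have hy'eq : y' = x * y * x'⁻¹ := by rw [← h1]; group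
  have hx'eq : x' = y'⁻¹ * (x * y) := by rw [← h1]; group
  have hφp : FG.φp y' = FG.φm x * FG.φp y * (FG.φm x')⁻¹ := by rw [← h2]; group
  have hφm : FG.φm y' = FG.φm x * FG.φm y * (FG.φm x')⁻¹ := by
    rw [hy'eq]; simp [map_mul, map_inv, mul_assoc]
  have hyR : y' = FG.xR x y := by
    apply psi_inj FG
    rw [psi_xR]
    show FG.φp y' * (FG.φm y')⁻¹ =
      FG.φm x * (FG.φp y * (FG.φm y)⁻¹) * (FG.φm x)⁻¹
    rw [hφp, hφm]; group
  refine ⟨?_, hyR⟩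
  apply psi_inj FG
  rw [psi_xL, ← hyR]
  have hφpx' : FG.φp x' = (FG.φp y')⁻¹ * (FG.φp x * FG.φp y) := by
    rw [hx'eq]; simp [map_mul, map_inv, mul_assoc]
  have hφmx' : FG.φm x' = (FG.φp y')⁻¹ * (FG.φm x * FG.φp y) := by
    rw [← h2]; group
  show FG.φp x' * (FG.φm x')⁻¹ =
    (FG.φp y')⁻¹ * (FG.φp x * (FG.φm x)⁻¹) * FG.φp y'
  rw [hφpx', hφmx']; group

/-- The pair `(xL, xR)` satisfies the system. -/
lemma system_holds (x y : Gs) :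
    FG.xR x y * FG.xL x y = x * y ∧
      FG.φp (FG.xR x y) * FG.φm (FG.xL x y) = FG.φm x * FG.φp y := by
  set a := FG.xR x y with ha
  have key : FG.φp a * (FG.φm a)⁻¹ =
      FG.φm x * (FG.φp y * (FG.φm y)⁻¹) * (FG.φm x)⁻¹ := psi_xR FG x y
  set x'' := a⁻¹ * (x * y) with hx''
  have h1 : a * x'' = x * y := by rw [hx'']; group
  have h2 : FG.φp a * FG.φm x'' = FG.φm x * FG.φp y := by
    have hm : FG.φm x'' = (FG.φm a)⁻¹ * (FG.φm x * FG.φm y) := by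
      rw [hx'']; simp [map_mul, map_inv, mul_assoc]
    rw [hm, ← mul_assoc, key]; group
  obtain ⟨hL, -⟩ := system_unique FG x y x'' a h1 h2
  exact ⟨by rw [← hL]; exact h1, by rw [← hL]; exact h2⟩

end Aux

/-- `(xL(x,y), xR(x,y))` is the unique pair `(x', y')` with `y'x' = xy` in `G*` and
`φ₊(y')φ₋(x') = φ₋(x)φ₊(y)` in `Ḡ`. -/
theorem factorizedGroup_xL_xR_unique {Gb Gs : Type*} [Group Gb] [Group Gs]
    (FG : FactorizedGroup Gb Gs) (x y x' y' : Gs) :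
    (y' * x' = x * y ∧ FG.φp y' * FG.φm x' = FG.φm x * FG.φp y) ↔
      (x' = FG.xL x y ∧ y' = FG.xR x y) := by
  constructor
  · rintro ⟨h1, h2⟩
    exact system_unique FG x y x' y' h1 h2
  · rintro ⟨hx', hy'⟩
    subst hx'; subst hy'
    exact system_holds FG x y
end

section
/- With the factorized group (G, Ḡ, G*, φ₊, φ₋) of the Borel of SL₂(ℂ) (where G* = {[[1,ε],[0,κ]] : κ ∈ ℂ*, ε ∈ ℂ}, φ₋ the inclusion, φ₊([[1,ε],[0,κ]]) = [[κ,0],[0,1]]), the Yang–Baxter map R is given explicitly by R([[1,ε₁],[0,κ₁]], [[1,ε₂],[0,κ₂]]) = ([[1, ε₁/κ₂],[0, κ₁]], [[1, (ε₂ + ε₁(κ₂ − κ₂⁻¹))/κ₁],[0, κ₂]]). -/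
open Matrix

noncomputable section

/-- `φ₋ : G* → Ḡ` is the inclusion: the pair `(κ, ε)` corresponds to the matrix
`[[1, ε],[0, κ]]`. -/
def phiM (p : ℂˣ × ℂ) : Matrix (Fin 2) (Fin 2) ℂ := !![1, p.2; 0, (p.1 : ℂ)]

/-- `φ₊([[1, ε],[0, κ]]) = [[κ, 0],[0, 1]]`. -/
def phiP (p : ℂˣ × ℂ) : Matrix (Fin 2) (Fin 2) ℂ := !![(p.1 : ℂ), 0; 0, 1]

/-- `ψ(x) = φ₊(x) φ₋(x)⁻¹`. -/
def psiB (p : ℂˣ × ℂ) : Matrix (Fin 2) (Fin 2) ℂ := phiP p * (phiM p)⁻¹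

/-- The inverse of `ψ` (defined on its image `G`). -/
def psiInvB (A : Matrix (Fin 2) (Fin 2) ℂ) : ℂˣ × ℂ := Function.invFun psiB A

/-- `xR(x,y) = ψ⁻¹(φ₋(x) ψ(y) φ₋(x)⁻¹)`. -/
def xRB (x y : ℂˣ × ℂ) : ℂˣ × ℂ := psiInvB (phiM x * psiB y * (phiM x)⁻¹)

/-- `xL(x,y) = ψ⁻¹(φ₊(xR(x,y))⁻¹ ψ(x) φ₊(xR(x,y)))`. -/
def xLB (x y : ℂˣ × ℂ) : ℂˣ × ℂ :=
  psiInvB ((phiP (xRB x y))⁻¹ * psiB x * phiP (xRB x y))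

/-- The Yang–Baxter map `R(x,y) = (xL(x,y), xR(x,y))`. -/
def RB : (ℂˣ × ℂ) × (ℂˣ × ℂ) → (ℂˣ × ℂ) × (ℂˣ × ℂ) :=
  fun p => (xLB p.1 p.2, xRB p.1 p.2)

lemma phiM_inv (p : ℂˣ × ℂ) :
    (phiM p)⁻¹ = !![1, -p.2 * ((p.1:ℂ))⁻¹; 0, ((p.1:ℂ))⁻¹] := by
  have hdet : (phiM p).det = (p.1 : ℂ) := by
    simp [phiM, Matrix.det_fin_two_of]
  rw [Matrix.inv_def, hdet, Matrix.adjugate_fin_two]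
  ext i j
  fin_cases i <;> fin_cases j <;>
    simp [phiM, Ring.inverse_eq_inv] <;> ring

lemma psiB_explicit (p : ℂˣ × ℂ) :
    psiB p = !![(p.1:ℂ), -p.2; 0, ((p.1:ℂ))⁻¹] := by
  rw [psiB, phiM_inv, phiP]
  ext i j
  fin_cases i <;> fin_cases j <;>
    (simp [Matrix.mul_apply, Fin.sum_univ_two]; try field_simp)

lemma psiB_injective : Function.Injective psiB := by
  intro p q h
  rw [psiB_explicit, psiB_explicit] at h
  have h00 := congrFun (congrFun h 0) 0
  have h01 := congrFun (congrFun h 0) 1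
  simp at h00 h01
  obtain ⟨p1, p2⟩ := p; obtain ⟨q1, q2⟩ := q
  simp only [Prod.mk.injEq]
  exact ⟨Units.ext h00, h01⟩

lemma psiInvB_psiB (p : ℂˣ × ℂ) : psiInvB (psiB p) = p :=
  Function.leftInverse_invFun psiB_injective p

/-- Explicit formula for the Yang–Baxter map of the Borel `SL₂(ℂ)` factorized group:
`R([[1,ε₁],[0,κ₁]], [[1,ε₂],[0,κ₂]]) =
  ([[1, ε₁/κ₂],[0, κ₁]], [[1, (ε₂ + ε₁(κ₂ − κ₂⁻¹))/κ₁],[0, κ₂]])`. -/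
theorem RB_explicit (κ₁ κ₂ : ℂˣ) (ε₁ ε₂ : ℂ) :
    RB ((κ₁, ε₁), (κ₂, ε₂)) =
      ((κ₁, ε₁ / (κ₂ : ℂ)),
       (κ₂, (ε₂ + ε₁ * ((κ₂ : ℂ) - (κ₂ : ℂ)⁻¹)) / (κ₁ : ℂ))) := by
  have key : ∀ x y : ℂˣ × ℂ, ∀ z : ℂˣ × ℂ,
      phiM x * psiB y * (phiM x)⁻¹ = psiB z → xRB x y = z := by
    intro x y z h
    rw [xRB, h, psiInvB_psiB]
  have hR : xRB (κ₁, ε₁) (κ₂, ε₂) = (κ₂, (ε₂ + ε₁ * ((κ₂ : ℂ) - (κ₂ : ℂ)⁻¹)) / (κ₁ : ℂ)) := by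
    apply key
    rw [phiM_inv, psiB_explicit, psiB_explicit, phiM]
    ext i j
    fin_cases i <;> fin_cases j <;>
      (simp [Matrix.mul_apply, Fin.sum_univ_two]; try field_simp; try ring)
  have hL : xLB (κ₁, ε₁) (κ₂, ε₂) = (κ₁, ε₁ / (κ₂ : ℂ)) := by
    rw [xLB, hR]
    have : (phiP ((κ₂, (ε₂ + ε₁ * ((κ₂ : ℂ) - (κ₂ : ℂ)⁻¹)) / (κ₁ : ℂ)) : ℂˣ × ℂ))⁻¹ *
        psiB ((κ₁, ε₁) : ℂˣ × ℂ) * phiP ((κ₂, (ε₂ + ε₁ * ((κ₂ : ℂ) - (κ₂ : ℂ)⁻¹)) / (κ₁ : ℂ)) : ℂˣ × ℂ)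
        = psiB ((κ₁, ε₁ / (κ₂ : ℂ)) : ℂˣ × ℂ) := by
      have hPinv : (phiP ((κ₂, (ε₂ + ε₁ * ((κ₂ : ℂ) - (κ₂ : ℂ)⁻¹)) / (κ₁ : ℂ)) : ℂˣ × ℂ))⁻¹
          = !![((κ₂:ℂ))⁻¹, 0; 0, 1] := by
        have hdet : (phiP ((κ₂, (ε₂ + ε₁ * ((κ₂ : ℂ) - (κ₂ : ℂ)⁻¹)) / (κ₁ : ℂ)) : ℂˣ × ℂ)).det = (κ₂ : ℂ) := by
          simp [phiP, Matrix.det_fin_two_of]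
        rw [Matrix.inv_def, hdet, Matrix.adjugate_fin_two]
        ext i j
        fin_cases i <;> fin_cases j <;>
          simp [phiP, Ring.inverse_eq_inv]
      rw [hPinv, psiB_explicit, psiB_explicit, phiP]
      ext i j
      fin_cases i <;> fin_cases j <;>
        (simp [Matrix.mul_apply, Fin.sum_univ_two]; try field_simp; try ring)
    rw [this, psiInvB_psiB]
  simp [RB, hR, hL]
end
end

section
/- Identify G* with ℂ* × ℂ via (κ, ε) ↔ [[1,ε],[0,κ]] in the Borel SL₂(ℂ) factorized group example. Then the map R : (ℂ*×ℂ)² → (ℂ*×ℂ)² defined by R((κ₁,ε₁),(κ₂,ε₂)) = ((κ₁, ε₁/κ₂), (κ₂, (ε₂ + ε₁(κ₂ − κ₂⁻¹))/κ₁)) is a bijection satisfying the set-theoretical Yang–Baxter equation R₂₃ R₁₃ R₁₂ = R₁₂ R₁₃ R₂₃. -/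
/-- The explicit Yang–Baxter map on `ℂ* × ℂ` coming from the Borel `SL₂(ℂ)` factorized
group: `R((κ₁,ε₁),(κ₂,ε₂)) = ((κ₁, ε₁/κ₂), (κ₂, (ε₂ + ε₁(κ₂ − κ₂⁻¹))/κ₁))`. -/
noncomputable def RBorel : (ℂˣ × ℂ) × (ℂˣ × ℂ) → (ℂˣ × ℂ) × (ℂˣ × ℂ) :=
  fun p =>
    ((p.1.1, p.1.2 / (p.2.1 : ℂ)),
     (p.2.1, (p.2.2 + p.1.2 * ((p.2.1 : ℂ) - (p.2.1 : ℂ)⁻¹)) / (p.1.1 : ℂ)))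

/-- Explicit inverse of `RBorel`. -/
noncomputable def RBorelInv : (ℂˣ × ℂ) × (ℂˣ × ℂ) → (ℂˣ × ℂ) × (ℂˣ × ℂ) :=
  fun p =>
    ((p.1.1, p.1.2 * (p.2.1 : ℂ)),
     (p.2.1, p.2.2 * (p.1.1 : ℂ) - p.1.2 * (p.2.1 : ℂ) * ((p.2.1 : ℂ) - (p.2.1 : ℂ)⁻¹)))

/-- The explicit map `R` on `(ℂ* × ℂ)²` is a bijection satisfying the set-theoretical
Yang–Baxter equation `R₂₃ R₁₃ R₁₂ = R₁₂ R₁₃ R₂₃`. -/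
theorem RBorel_bijective_yangBaxter :
    Function.Bijective RBorel ∧
      map23 RBorel ∘ map13 RBorel ∘ map12 RBorel =
        map12 RBorel ∘ map13 RBorel ∘ map23 RBorel := by
  constructor
  · apply Function.bijective_iff_has_inverse.mpr
    refine ⟨RBorelInv, fun p => ?_, fun p => ?_⟩ <;>
    · obtain ⟨⟨k1, e1⟩, ⟨k2, e2⟩⟩ := p
      simp only [RBorel, RBorelInv, Prod.mk.injEq]
      and_intros <;> try trivial
      all_goals field_simp
      all_goals ring
  · funext p
    obtain ⟨⟨k1, e1⟩, ⟨k2, e2⟩, ⟨k3, e3⟩⟩ := p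
    simp only [map12, map13, map23, RBorel, Function.comp_apply, Prod.mk.injEq]
    and_intros <;> try trivial
    all_goals field_simp
    all_goals try ring
    all_goals tauto
end

section
/- Let ξ = e^{2πi/N}, r as above, and σ = ξ^{−r(r−1)/2}. For x = ξ^α, the following identity of complex numbers holds: [α]_ξ [α−1]_ξ ⋯ [α−r+1]_ξ = σ [rα]_ξ, where [y]_ξ = ξ^y − ξ^{−y} with ξ^y = e^{2πiy/N}. -/
open Finset Complex

/-- The quantum number `[y]_ξ = ξ^y − ξ^{−y}` where `ξ^y = e^{2πiy/N}`. -/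
noncomputable def qbr (N : ℕ) (y : ℂ) : ℂ :=
  Complex.exp (2 * Real.pi * Complex.I * y / N) -
    Complex.exp (-(2 * Real.pi * Complex.I * y / N))

/-- Scalar factorization: for a primitive `r`-th root `ζ`, `∏_{k<r}(w - ζ^k) = w^r - 1`. -/
lemma prod_sub_primroot {r : ℕ} (hr : 0 < r) {ζ : ℂ} (hζ : IsPrimitiveRoot ζ r) (w : ℂ) :
    ∏ k ∈ range r, (w - ζ ^ k) = w ^ r - 1 := by
  have h := X_pow_sub_C_eq_prod (R := ℂ) hζ (α := 1) (a := 1) hr (one_pow r)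
  have := congrArg (Polynomial.eval w) h
  simpa [Polynomial.eval_prod] using this.symm

/-- For `ξ = e^{2πi/N}`, `r = N/2` if `N` even and `r = N` if `N` odd, and
`σ = ξ^{−r(r−1)/2}`, one has `[α]_ξ [α−1]_ξ ⋯ [α−r+1]_ξ = σ [rα]_ξ` for all `α ∈ ℂ`. -/
theorem qfalling_factorial_eq (N : ℕ) (hN : 0 < N)
    (r : ℕ) (hr : r = if Even N then N / 2 else N) (α : ℂ) :
    ∏ k ∈ Finset.range r, qbr N (α - k) =
      Complex.exp (2 * Real.pi * Complex.I *
          (-((r : ℂ) * ((r : ℂ) - 1) / 2)) / N) *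
        qbr N (r * α) := by
  have hNC : (N : ℂ) ≠ 0 := Nat.cast_ne_zero.mpr hN.ne'
  set t : ℂ := 2 * Real.pi * Complex.I / N with ht
  set ζ : ℂ := Complex.exp (2 * t) with hζdef
  set w : ℂ := Complex.exp (2 * t * α) with hwdef
  have hrpos : 0 < r := by
    rcases Nat.even_or_odd N with ⟨m, hm⟩ | h
    · rw [hr, if_pos ⟨m, hm⟩]; omega
    · rw [hr, if_neg (Nat.not_even_iff_odd.mpr h)]; omega
  -- ζ is a primitive r-th root of unity
  have hprim : IsPrimitiveRoot ζ r := by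
    rcases Nat.even_or_odd N with ⟨m, hm⟩ | h
    · have hrm : r = m := by rw [hr, if_pos ⟨m, hm⟩]; omega
      have hm0 : m ≠ 0 := by omega
      have hmC : (m : ℂ) ≠ 0 := Nat.cast_ne_zero.mpr hm0
      have : ζ = Complex.exp (2 * Real.pi * Complex.I / m) := by
        rw [hζdef, ht]
        congr 1
        have hNm : (N : ℂ) = 2 * m := by push_cast [hm]; ring
        rw [hNm]
        field_simp
      rw [this, hrm]
      exact Complex.isPrimitiveRoot_exp m hm0
    · have hrN : r = N := by rw [hr, if_neg (Nat.not_even_iff_odd.mpr h)]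
      have hbase : IsPrimitiveRoot (Complex.exp (2 * Real.pi * Complex.I / N)) N :=
        Complex.isPrimitiveRoot_exp N hN.ne'
      have h2 : ζ = (Complex.exp (2 * Real.pi * Complex.I / N)) ^ 2 := by
        rw [hζdef, ht, ← Complex.exp_nat_mul]; ring_nf
      rw [h2, hrN]
      exact hbase.pow_of_coprime 2 (Nat.coprime_two_left.mpr h)
  -- rewrite each factor
  have hfac : ∀ k ∈ range r, qbr N (α - k) =
      Complex.exp (-(t * α) - t * k) * (w - ζ ^ k) := by
    intro k _
    have : Complex.exp (-(t * α) - t * k) * (w - ζ ^ k) =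
        Complex.exp (2 * Real.pi * Complex.I * (α - k) / N) -
          Complex.exp (-(2 * Real.pi * Complex.I * (α - k) / N)) := by
      rw [hwdef, hζdef, ← Complex.exp_nat_mul, mul_sub, ← Complex.exp_add, ← Complex.exp_add]
      congr 1 <;> congr 1 <;> (rw [ht]; field_simp; ring)
    rw [qbr, ← this]
  rw [Finset.prod_congr rfl hfac, Finset.prod_mul_distrib, ← Complex.exp_sum,
    prod_sub_primroot hrpos hprim w]
  have hcast : ∑ k ∈ range r, (k : ℂ) = (r : ℂ) * ((r : ℂ) - 1) / 2 := by
    obtain ⟨m, rfl⟩ : ∃ m, r = m + 1 := ⟨r - 1, by omega⟩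
    have h2 : (∑ i ∈ range (m + 1), i) * 2 = (m + 1) * m := by
      simpa using Finset.sum_range_id_mul_two (m + 1)
    have := congrArg (fun n : ℕ => (n : ℂ)) h2
    push_cast at this
    push_cast
    linear_combination this / 2
  have hsum : ∑ k ∈ range r, (-(t * α) - t * k) =
      -(t * ((r : ℂ) * α)) - t * ((r : ℂ) * ((r : ℂ) - 1) / 2) := by
    rw [Finset.sum_sub_distrib, Finset.sum_const, ← Finset.mul_sum, hcast, Finset.card_range]
    ring
  rw [hsum]
  have hwr : w ^ r = Complex.exp (2 * t * α * r) := by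
    rw [hwdef, ← Complex.exp_nat_mul]; ring_nf
  have e1 : Complex.exp (2 * Real.pi * Complex.I * (-((r : ℂ) * ((r : ℂ) - 1) / 2)) / N)
      = Complex.exp (-(t * ((r : ℂ) * ((r : ℂ) - 1) / 2))) := by
    rw [ht]; ring_nf
  have e2 : qbr N (r * α) = Complex.exp (t * ((r : ℂ) * α)) -
      Complex.exp (-(t * ((r : ℂ) * α))) := by
    rw [qbr, ht]; ring_nf
  rw [hwr, e1, e2, Complex.exp_sub]
  have key : Complex.exp (-(t * ((r : ℂ) * α))) * (Complex.exp (2 * t * α * r) - 1)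
      = Complex.exp (t * ((r : ℂ) * α)) - Complex.exp (-(t * ((r : ℂ) * α))) := by
    rw [mul_sub, ← Complex.exp_add, mul_one]; ring_nf
  rw [div_mul_eq_mul_div, key,
    Complex.exp_neg (t * ((r : ℂ) * ((r : ℂ) - 1) / 2)), inv_mul_eq_div]
end

section
/- Let ξ = e^{2πi/N} with r defined as the smallest positive integer with ξ^r = ±1 ([r]_ξ = 0), and σ = ξ^{−r(r−1)/2}. Then the limit as q → ξ of the quantum binomial coefficient qbinom(ℓr + k, k)_q equals ξ^{rℓk} for all ℓ ∈ ℤ and 0 ≤ k < r, and the limit of qbinom((ℓ+1)r, r)_q equals ξ^{r²ℓ}(ℓ+1). -/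
open Filter Topology

/-- The quantum integer `[m]_q = q^m − q^{−m}` for `m : ℤ` and `q : ℂ`. -/
noncomputable def qIntC (q : ℂ) (m : ℤ) : ℂ := q ^ m - q ^ (-m)

/-- The quantum binomial coefficient
`qbinom(m, k)_q = ([m]_q [m−1]_q ⋯ [m−k+1]_q) / [k]_q!`. -/
noncomputable def qBinomC (q : ℂ) (m : ℤ) (k : ℕ) : ℂ :=
  (∏ j ∈ Finset.range k, qIntC q (m - j)) /
    ∏ j ∈ Finset.range k, qIntC q ((j : ℤ) + 1)

lemma qIntC_hasDerivAt (m : ℤ) (ξ : ℂ) (hξ0 : ξ ≠ 0) :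
    HasDerivAt (fun q : ℂ => qIntC q m)
      ((m : ℂ) * ξ ^ (m - 1) + (m : ℂ) * ξ ^ (-m - 1)) ξ := by
  have h := (hasDerivAt_zpow m ξ (Or.inl hξ0)).sub
    (hasDerivAt_zpow (-m) ξ (Or.inl hξ0))
  have : ((m : ℂ) * ξ ^ (m - 1) - ((-m : ℤ) : ℂ) * ξ ^ (-m - 1))
      = (m : ℂ) * ξ ^ (m - 1) + (m : ℂ) * ξ ^ (-m - 1) := by push_cast; ring
  rw [this] at h
  exact h

lemma qIntC_contAt (m : ℤ) (ξ : ℂ) (hξ0 : ξ ≠ 0) :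
    ContinuousAt (fun q : ℂ => qIntC q m) ξ :=
  (qIntC_hasDerivAt m ξ hξ0).continuousAt

/-- At `ξ = e^{2πi/N}` (with `r` minimal with `[r]_ξ = 0`), the quantum binomial
coefficients have the limits `qbinom(ℓr + k, k)_q → ξ^{rℓk}` for `0 ≤ k < r` and
`qbinom((ℓ+1)r, r)_q → ξ^{r²ℓ}(ℓ+1)` as `q → ξ`. -/
theorem qbinom_root_of_unity_limits (N : ℕ) (hN : 0 < N)
    (ξ : ℂ) (hξ : ξ = Complex.exp (2 * Real.pi * Complex.I / N))
    (r : ℕ) (hr : r = if Even N then N / 2 else N)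
    (ℓ : ℤ) (k : ℕ) (hk : k < r) :
    Tendsto (fun q : ℂ => qBinomC q (ℓ * r + k) k) (𝓝[≠] ξ)
      (𝓝 (ξ ^ ((r : ℤ) * ℓ * k))) ∧
    Tendsto (fun q : ℂ => qBinomC q ((ℓ + 1) * r) r) (𝓝[≠] ξ)
      (𝓝 (ξ ^ ((r : ℤ) ^ 2 * ℓ) * ((ℓ : ℂ) + 1))) := by
  have hξ0 : ξ ≠ 0 := by rw [hξ]; exact Complex.exp_ne_zero _
  have hprim : IsPrimitiveRoot ξ N := by
    rw [hξ]; exact Complex.isPrimitiveRoot_exp N hN.ne'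
  have hrpos : 0 < r := lt_of_le_of_lt (Nat.zero_le k) hk
  -- ξ^(2r) = 1
  have h2r : ξ ^ (2 * r) = 1 := by
    rcases Nat.even_or_odd N with hE | hO
    · have hNr : 2 * r = N := by
        rw [hr, if_pos hE]; obtain ⟨c, hc⟩ := hE; omega
      rw [hNr]; exact hprim.pow_eq_one
    · have hNr : r = N := by rw [hr, if_neg (Nat.not_even_iff_odd.mpr hO)]
      rw [hNr, mul_comm, pow_mul, hprim.pow_eq_one, one_pow]
  -- ξ^(-(r*s)) = ξ^(r*s)
  have hsym : ∀ s : ℤ, ξ ^ (-((r : ℤ) * s)) = ξ ^ ((r : ℤ) * s) := by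
    intro s
    have hu : ξ ^ ((r : ℤ) * s) * ξ ^ ((r : ℤ) * s) = 1 := by
      rw [← zpow_add₀ hξ0]
      have h1 : (r : ℤ) * s + (r : ℤ) * s = ((2 * r : ℕ) : ℤ) * s := by push_cast; ring
      rw [h1, zpow_mul, zpow_natCast, h2r, one_zpow]
    rw [zpow_neg]
    exact inv_eq_of_mul_eq_one_left hu
  -- shift lemma
  have hshift : ∀ m s : ℤ, qIntC ξ (m + (r : ℤ) * s) = ξ ^ ((r : ℤ) * s) * qIntC ξ m := by
    intro m s
    unfold qIntC
    rw [neg_add, zpow_add₀ hξ0, zpow_add₀ hξ0, hsym s]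
    ring
  have hzero : ∀ s : ℤ, qIntC ξ ((r : ℤ) * s) = 0 := by
    intro s
    have h := hshift 0 s
    simpa [qIntC] using h
  -- nonvanishing for 0 < m < r
  have hne : ∀ m : ℕ, 0 < m → m < r → qIntC ξ (m : ℤ) ≠ 0 := by
    intro m hm0 hmr h
    have heq : ξ ^ ((m : ℤ)) = ξ ^ (-(m : ℤ)) := sub_eq_zero.mp h
    have h2 : ξ ^ ((m : ℤ)) * ξ ^ ((m : ℤ)) = 1 := by
      nth_rewrite 2 [heq]
      rw [← zpow_add₀ hξ0]; simp
    have h3 : ξ ^ (2 * m) = 1 := by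
      have : ξ ^ (((2 * m : ℕ)) : ℤ) = 1 := by
        push_cast
        rw [two_mul, zpow_add₀ hξ0]; exact h2
      rwa [zpow_natCast] at this
    have hdvd : N ∣ 2 * m := (hprim.pow_eq_one_iff_dvd _).mp h3
    rcases Nat.even_or_odd N with hE | hO
    · have hNr : N = 2 * r := by
        rw [hr, if_pos hE]; obtain ⟨c, hc⟩ := hE; omega
      rw [hNr] at hdvd
      obtain ⟨c, hc⟩ := hdvd
      rw [mul_assoc] at hc
      have hm : m = r * c := by omega
      rcases Nat.eq_zero_or_pos c with rfl | hc1
      · simp at hm; omega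
      · have := Nat.le_mul_of_pos_right r hc1; omega
    · have hNr : r = N := by rw [hr, if_neg (Nat.not_even_iff_odd.mpr hO)]
      have hdm : N ∣ m := (Nat.coprime_two_right.mpr hO).dvd_of_dvd_mul_left hdvd
      have := Nat.le_of_dvd hm0 hdm; omega
  -- denominators are nonzero
  have hden : ∀ n : ℕ, n ≤ r - 1 → (∏ j ∈ Finset.range n, qIntC ξ ((j : ℤ) + 1)) ≠ 0 := by
    intro n hn
    refine Finset.prod_ne_zero_iff.mpr ?_
    intro j hj
    have hj' := Finset.mem_range.mp hj
    have hcast : ((j : ℤ) + 1) = ((j + 1 : ℕ) : ℤ) := by push_cast; ring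
    rw [hcast]
    exact hne (j + 1) (Nat.succ_pos j) (by omega)
  -- reflect lemma
  have hrefl : ∀ n : ℕ, (∏ j ∈ Finset.range n, qIntC ξ ((n : ℤ) - j))
      = ∏ j ∈ Finset.range n, qIntC ξ ((j : ℤ) + 1) := by
    intro n
    rw [← Finset.prod_range_reflect (fun j => qIntC ξ ((j : ℤ) + 1)) n]
    refine Finset.prod_congr rfl ?_
    intro j hj
    have hjn := Finset.mem_range.mp hj
    congr 1
    omega
  constructor
  · -- part 1
    have hnum : (∏ j ∈ Finset.range k, qIntC ξ (ℓ * r + k - j))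
        = ξ ^ ((r : ℤ) * ℓ * k) * ∏ j ∈ Finset.range k, qIntC ξ ((j : ℤ) + 1) := by
      have h1 : ∀ j ∈ Finset.range k, qIntC ξ (ℓ * r + k - j)
          = ξ ^ ((r : ℤ) * ℓ) * qIntC ξ ((k : ℤ) - j) := by
        intro j hj
        have he : (ℓ * r + k - j : ℤ) = ((k : ℤ) - j) + (r : ℤ) * ℓ := by ring
        rw [he, hshift]
      rw [Finset.prod_congr rfl h1, Finset.prod_mul_distrib, Finset.prod_const,
        Finset.card_range, hrefl k]
      congr 1
      rw [← zpow_natCast (ξ ^ ((r : ℤ) * ℓ)) k, ← zpow_mul]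
    have hd := hden k (by omega)
    have hval : qBinomC ξ (ℓ * r + k) k = ξ ^ ((r : ℤ) * ℓ * k) := by
      unfold qBinomC
      rw [hnum, mul_div_assoc, div_self hd, mul_one]
    have hc : Tendsto (fun q : ℂ => qBinomC q (ℓ * r + k) k) (𝓝 ξ)
        (𝓝 (qBinomC ξ (ℓ * r + k) k)) := by
      unfold qBinomC
      exact Tendsto.div
        (tendsto_finset_prod _ fun j _ => (qIntC_contAt _ ξ hξ0).tendsto)
        (tendsto_finset_prod _ fun j _ => (qIntC_contAt _ ξ hξ0).tendsto) hd
    rw [hval] at hc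
    exact hc.mono_left nhdsWithin_le_nhds
  · -- part 2
    obtain ⟨r', rfl⟩ : ∃ r', r = r' + 1 := ⟨r - 1, by omega⟩
    set r : ℕ := r' + 1 with hrr'
    set m2 : ℤ := (ℓ + 1) * (r : ℤ) with hm2
    set C : ℂ := ∏ j ∈ Finset.range r', qIntC ξ ((j : ℤ) + 1) with hC
    have hC0 : C ≠ 0 := hden r' (by omega)
    have key : ∀ s : ℤ, ξ ^ (-((r : ℤ) * s) - 1) = ξ ^ ((r : ℤ) * s - 1) := by
      intro s
      rw [sub_eq_add_neg, sub_eq_add_neg, zpow_add₀ hξ0, zpow_add₀ hξ0, hsym]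
    -- derivative of the vanishing numerator factor
    have hdf : HasDerivAt (fun q : ℂ => qIntC q m2) (2 * (m2 : ℂ) * ξ ^ (m2 - 1)) ξ := by
      have h := qIntC_hasDerivAt m2 ξ hξ0
      have e1 : ξ ^ (-m2 - 1) = ξ ^ (m2 - 1) := by
        rw [show -m2 - 1 = -((r : ℤ) * (ℓ + 1)) - 1 by rw [hm2]; ring, key,
          show (r : ℤ) * (ℓ + 1) - 1 = m2 - 1 by rw [hm2]; ring]
      rw [e1, show (m2 : ℂ) * ξ ^ (m2 - 1) + (m2 : ℂ) * ξ ^ (m2 - 1)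
        = 2 * (m2 : ℂ) * ξ ^ (m2 - 1) by ring] at h
      exact h
    have hdr : HasDerivAt (fun q : ℂ => qIntC q ((r' : ℤ) + 1))
        (2 * ((r : ℕ) : ℂ) * ξ ^ ((r : ℤ) - 1)) ξ := by
      have h := qIntC_hasDerivAt ((r' : ℤ) + 1) ξ hξ0
      have e1 : ξ ^ (-((r' : ℤ) + 1) - 1) = ξ ^ (((r' : ℤ) + 1) - 1) := by
        rw [show -((r' : ℤ) + 1) - 1 = -((r : ℤ) * 1) - 1 by push_cast [hrr']; ring, key,
          show (r : ℤ) * 1 - 1 = ((r' : ℤ) + 1) - 1 by push_cast [hrr']; ring]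
      rw [e1, show (((r' : ℤ) + 1 : ℤ) : ℂ) * ξ ^ (((r' : ℤ) + 1) - 1)
          + (((r' : ℤ) + 1 : ℤ) : ℂ) * ξ ^ (((r' : ℤ) + 1) - 1)
        = 2 * ((r : ℕ) : ℂ) * ξ ^ ((r : ℤ) - 1) by push_cast [hrr']; ring_nf] at h
      exact h
    have hf0 : qIntC ξ m2 = 0 := by
      rw [show m2 = (r : ℤ) * (ℓ + 1) by rw [hm2]; ring]
      exact hzero (ℓ + 1)
    have hr0 : qIntC ξ ((r' : ℤ) + 1) = 0 := by
      rw [show ((r' : ℤ) + 1) = (r : ℤ) * 1 by push_cast [hrr']; ring]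
      exact hzero 1
    -- slope limits
    have hslope_f : Tendsto (fun q : ℂ => qIntC q m2 / (q - ξ)) (𝓝[≠] ξ)
        (𝓝 (2 * (m2 : ℂ) * ξ ^ (m2 - 1))) := by
      have h := hasDerivAt_iff_tendsto_slope.mp hdf
      refine h.congr fun q => ?_
      rw [slope_def_field, hf0, sub_zero]
    have hslope_r : Tendsto (fun q : ℂ => qIntC q ((r' : ℤ) + 1) / (q - ξ)) (𝓝[≠] ξ)
        (𝓝 (2 * ((r : ℕ) : ℂ) * ξ ^ ((r : ℤ) - 1))) := by
      have h := hasDerivAt_iff_tendsto_slope.mp hdr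
      refine h.congr fun q => ?_
      rw [slope_def_field, hr0, sub_zero]
    -- the continuous remaining parts
    set G : ℂ := ∏ j ∈ Finset.range r', qIntC ξ (m2 - ((j : ℤ) + 1)) with hG
    have hgt : Tendsto (fun q : ℂ => ∏ j ∈ Finset.range r', qIntC q (m2 - ((j : ℤ) + 1)))
        (𝓝[≠] ξ) (𝓝 G) :=
      (tendsto_finset_prod _ fun j _ => (qIntC_contAt _ ξ hξ0).tendsto).mono_left
        nhdsWithin_le_nhds
    have hct : Tendsto (fun q : ℂ => ∏ j ∈ Finset.range r', qIntC q ((j : ℤ) + 1))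
        (𝓝[≠] ξ) (𝓝 C) :=
      (tendsto_finset_prod _ fun j _ => (qIntC_contAt _ ξ hξ0).tendsto).mono_left
        nhdsWithin_le_nhds
    -- numerator and denominator slope limits
    have hP : Tendsto (fun q : ℂ =>
        (∏ j ∈ Finset.range r, qIntC q ((ℓ + 1) * ((r : ℕ) : ℤ) - j)) / (q - ξ)) (𝓝[≠] ξ)
        (𝓝 (G * (2 * (m2 : ℂ) * ξ ^ (m2 - 1)))) := by
      have heq : ∀ q : ℂ,
          (∏ j ∈ Finset.range r, qIntC q ((ℓ + 1) * ((r : ℕ) : ℤ) - j)) / (q - ξ)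
          = (∏ j ∈ Finset.range r', qIntC q (m2 - ((j : ℤ) + 1))) * (qIntC q m2 / (q - ξ)) := by
        intro q
        have e : (∏ j ∈ Finset.range r, qIntC q ((ℓ + 1) * ((r : ℕ) : ℤ) - j))
            = (∏ j ∈ Finset.range r', qIntC q (m2 - ((j : ℤ) + 1))) * qIntC q m2 := by
          rw [hrr',
            Finset.prod_range_succ' (fun j => qIntC q ((ℓ + 1) * (((r' + 1 : ℕ)) : ℤ) - j)) r']
          refine congrArg₂ (· * ·) (Finset.prod_congr rfl fun j hj => ?_) ?_
          · congr 1
            try rw [hm2]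
            try push_cast [hrr']
            try ring
          · congr 1
            try rw [hm2]
            try push_cast [hrr']
            try ring
        rw [e, mul_div_assoc]
      refine Tendsto.congr (fun q => (heq q).symm) (hgt.mul hslope_f)
    have hQ : Tendsto (fun q : ℂ =>
        (∏ j ∈ Finset.range r, qIntC q ((j : ℤ) + 1)) / (q - ξ)) (𝓝[≠] ξ)
        (𝓝 (C * (2 * ((r : ℕ) : ℂ) * ξ ^ ((r : ℤ) - 1)))) := by
      have heq : ∀ q : ℂ,
          (∏ j ∈ Finset.range r, qIntC q ((j : ℤ) + 1)) / (q - ξ)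
          = (∏ j ∈ Finset.range r', qIntC q ((j : ℤ) + 1))
            * (qIntC q ((r' : ℤ) + 1) / (q - ξ)) := by
        intro q
        rw [hrr', Finset.prod_range_succ (fun j => qIntC q ((j : ℤ) + 1)) r', mul_div_assoc]
      refine Tendsto.congr (fun q => (heq q).symm) (hct.mul hslope_r)
    have hdr0 : (2 * ((r : ℕ) : ℂ) * ξ ^ ((r : ℤ) - 1)) ≠ 0 := by
      apply mul_ne_zero (mul_ne_zero two_ne_zero ?_) (zpow_ne_zero _ hξ0)
      exact Nat.cast_ne_zero.mpr (by omega)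
    have hQne : C * (2 * ((r : ℕ) : ℂ) * ξ ^ ((r : ℤ) - 1)) ≠ 0 := mul_ne_zero hC0 hdr0
    have hdiv := hP.div hQ hQne
    -- identify the function with qBinomC eventually
    have hev : ∀ᶠ q in (𝓝[≠] ξ),
        ((∏ j ∈ Finset.range r, qIntC q ((ℓ + 1) * ((r : ℕ) : ℤ) - j)) / (q - ξ)) /
          ((∏ j ∈ Finset.range r, qIntC q ((j : ℤ) + 1)) / (q - ξ))
        = qBinomC q ((ℓ + 1) * r) r := by
      filter_upwards [self_mem_nhdsWithin] with q hq
      have hq0 : q - ξ ≠ 0 := sub_ne_zero.mpr hq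
      rw [div_div_div_cancel_right₀ hq0]
      rfl
    have hlim := hdiv.congr' hev
    -- compute G
    have hGval : G = (ξ ^ ((r : ℤ) * ℓ)) ^ r' * C := by
      rw [hG, hC]
      have h1 : ∀ j ∈ Finset.range r', qIntC ξ (m2 - ((j : ℤ) + 1))
          = ξ ^ ((r : ℤ) * ℓ) * qIntC ξ ((r' : ℤ) - j) := by
        intro j hj
        have he : m2 - ((j : ℤ) + 1) = ((r' : ℤ) - j) + (r : ℤ) * ℓ := by
          rw [hm2]; push_cast [hrr']; ring
        rw [he, hshift]
      rw [Finset.prod_congr rfl h1, Finset.prod_mul_distrib, Finset.prod_const,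
        Finset.card_range, hrefl r']
    -- final value computation
    have hval : G * (2 * (m2 : ℂ) * ξ ^ (m2 - 1)) /
        (C * (2 * ((r : ℕ) : ℂ) * ξ ^ ((r : ℤ) - 1)))
        = ξ ^ ((r : ℤ) ^ 2 * ℓ) * ((ℓ : ℂ) + 1) := by
      rw [hGval, div_eq_iff hQne]
      have e2 : (ξ ^ ((r : ℤ) * ℓ)) ^ r' = ξ ^ ((r : ℤ) * ℓ * r') := by
        rw [← zpow_natCast (ξ ^ ((r : ℤ) * ℓ)) r', ← zpow_mul]
      have e3 : ξ ^ ((r : ℤ) * ℓ * r') * ξ ^ (m2 - 1)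
          = ξ ^ ((r : ℤ) ^ 2 * ℓ) * ξ ^ ((r : ℤ) - 1) := by
        rw [← zpow_add₀ hξ0, ← zpow_add₀ hξ0]
        congr 1
        rw [hm2]; push_cast [hrr']; ring
      have e4 : (m2 : ℂ) = ((ℓ : ℂ) + 1) * ((r : ℕ) : ℂ) := by
        rw [hm2]; push_cast; ring
      rw [e2, e4]
      calc ξ ^ ((r : ℤ) * ℓ * r') * C * (2 * (((ℓ : ℂ) + 1) * ((r : ℕ) : ℂ)) * ξ ^ (m2 - 1))
          = (2 * ((ℓ : ℂ) + 1) * ((r : ℕ) : ℂ) * C)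
            * (ξ ^ ((r : ℤ) * ℓ * r') * ξ ^ (m2 - 1)) := by ring
        _ = (2 * ((ℓ : ℂ) + 1) * ((r : ℕ) : ℂ) * C)
            * (ξ ^ ((r : ℤ) ^ 2 * ℓ) * ξ ^ ((r : ℤ) - 1)) := by rw [e3]
        _ = ξ ^ ((r : ℤ) ^ 2 * ℓ) * ((ℓ : ℂ) + 1)
            * (C * (2 * ((r : ℕ) : ℂ) * ξ ^ ((r : ℤ) - 1))) := by ring
    rw [hval] at hlim
    exact hlim
end

section
/- For the 4×4 matrix R(a,b,t) = [[iab,0,0,0],[0,b,ib(a+a⁻¹),0],[0,0,a,0],[4it(a−a⁻¹),0,0,i]] with a,b ∈ ℂ*, t ∈ ℂ, regarded as an operator on ℂ²⊗ℂ², the following parameter-dependent Yang–Baxter relation holds on ℂ²⊗ℂ²⊗ℂ²: R₁₂(a,b,−t₁/c²) R₁₃(a,c,t₁) R₂₃(b,c,t₂) = R₂₃(b,c,(t₁(a⁴−1)−t₂a²)/a⁴) R₁₃(a,c,−t₁/b²) R₁₂(a,b,t₁). -/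
open Complex

/-- Lexicographic identification `(Fin 2) × (Fin 2) ≃ Fin 4`
(`e₀⊗e₀, e₀⊗e₁, e₁⊗e₀, e₁⊗e₁`). -/
def pairIdx (p : Fin 2 × Fin 2) : Fin 4 := ⟨2 * p.1.val + p.2.val, by omega⟩

/-- The holonomy `R`-matrix
`R(a,b,t) = [[iab,0,0,0],[0,b,ib(a+a⁻¹),0],[0,0,a,0],[4it(a−a⁻¹),0,0,i]]`
regarded as an operator on `ℂ² ⊗ ℂ²`. -/
noncomputable def Rhol (a b : ℂˣ) (t : ℂ) :
    Matrix (Fin 2 × Fin 2) (Fin 2 × Fin 2) ℂ :=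
  fun p q =>
    (!![I * a * b, 0, 0, 0;
        0, (b : ℂ), I * b * ((a : ℂ) + (a : ℂ)⁻¹), 0;
        0, 0, (a : ℂ), 0;
        4 * I * t * ((a : ℂ) - (a : ℂ)⁻¹), 0, 0, I] : Matrix (Fin 4) (Fin 4) ℂ)
      (pairIdx p) (pairIdx q)

/-- `M₁₂ = M ⊗ Id` on `ℂ² ⊗ ℂ² ⊗ ℂ²`. -/
def op12 (M : Matrix (Fin 2 × Fin 2) (Fin 2 × Fin 2) ℂ) :
    Matrix (Fin 2 × Fin 2 × Fin 2) (Fin 2 × Fin 2 × Fin 2) ℂ :=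
  fun p q => M (p.1, p.2.1) (q.1, q.2.1) * (if p.2.2 = q.2.2 then 1 else 0)

/-- `M₁₃`: act on the first and third tensor factors. -/
def op13 (M : Matrix (Fin 2 × Fin 2) (Fin 2 × Fin 2) ℂ) :
    Matrix (Fin 2 × Fin 2 × Fin 2) (Fin 2 × Fin 2 × Fin 2) ℂ :=
  fun p q => M (p.1, p.2.2) (q.1, q.2.2) * (if p.2.1 = q.2.1 then 1 else 0)

/-- `M₂₃ = Id ⊗ M` on `ℂ² ⊗ ℂ² ⊗ ℂ²`. -/
def op23 (M : Matrix (Fin 2 × Fin 2) (Fin 2 × Fin 2) ℂ) :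
    Matrix (Fin 2 × Fin 2 × Fin 2) (Fin 2 × Fin 2 × Fin 2) ℂ :=
  fun p q => M (p.2.1, p.2.2) (q.2.1, q.2.2) * (if p.1 = q.1 then 1 else 0)

set_option maxHeartbeats 4000000 in
/-- The parameter-dependent (holonomy) Yang–Baxter relation for the `N = 4` holonomy
`R`-matrix of semi-cyclic `U_i(sl₂)`-modules:
`R₁₂(a,b,−t₁/c²) R₁₃(a,c,t₁) R₂₃(b,c,t₂)
  = R₂₃(b,c,(t₁(a⁴−1)−t₂a²)/a⁴) R₁₃(a,c,−t₁/b²) R₁₂(a,b,t₁)`. -/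
theorem holonomy_yangBaxter_N4 (a b c : ℂˣ) (t₁ t₂ : ℂ) :
    op12 (Rhol a b (-t₁ / (c : ℂ) ^ 2)) * op13 (Rhol a c t₁) * op23 (Rhol b c t₂) =
      op23 (Rhol b c ((t₁ * ((a : ℂ) ^ 4 - 1) - t₂ * (a : ℂ) ^ 2) / (a : ℂ) ^ 4)) *
        op13 (Rhol a c (-t₁ / (b : ℂ) ^ 2)) * op12 (Rhol a b t₁) := by
  have hI3 : I ^ 3 = -I := by
    simp [pow_succ, Complex.I_mul_I]
  have ha : (a:ℂ) ≠ 0 := a.ne_zero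
  have hb : (b:ℂ) ≠ 0 := b.ne_zero
  have hc : (c:ℂ) ≠ 0 := c.ne_zero
  ext ⟨p1, p2, p3⟩ ⟨q1, q2, q3⟩
  simp only [Matrix.mul_apply, Fintype.sum_prod_type, Fin.sum_univ_two, op12, op13, op23]
  fin_cases p1 <;> fin_cases p2 <;> fin_cases p3 <;> fin_cases q1 <;> fin_cases q2 <;>
    fin_cases q3 <;>
    simp only [Rhol, pairIdx] <;>
    norm_num [Matrix.cons_val_zero, Matrix.cons_val_one, Matrix.head_cons,
      Matrix.cons_val_fin_one, Matrix.cons_val', Matrix.empty_val', Matrix.head_fin_const] <;>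
    (try field_simp) <;>
    (try ring1) <;>
    ring_nf <;>
    (try simp only [hI3, Complex.I_sq]) <;>
    (try ring1)
end
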